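/- Let n ≥ 1 and let f : ℝ^n → ℝ^n be a continuous intra order-preserving function. Then f is order-invariant if and only if there exists a continuous function w : ℝ^n → ℝ^n such that: (i) for every x ∈ ℝ^n, every permutation σ sorting x, and every i ∈ {1,…,n}, f(x)_{σ(i)} = Σ_{j=i}^{n} w_j(y), where y is the sorted version of x; (ii) for every x ∈ ℝ^n and every i < n, w_i(y) = 0 if y_i = y_{i+1} and w_i(y) > 0 if y_i > y_{i+1} (w_n(y) is unconstrained). -/

import Mathlib

/-- `f` is intra order-preserving: `x` and `f x` share the same ranking. -/
def IntraOrderPreserving (n : ℕ) (f : (Fin n → ℝ) → (Fin n → ℝ)) : Prop :=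
  ∀ (x : Fin n → ℝ) (i j : Fin n), x i > x j ↔ f x i > f x j

/-- `f` is order-invariant: it commutes with every permutation of the coordinates. -/
def OrderInvariant (n : ℕ) (f : (Fin n → ℝ) → (Fin n → ℝ)) : Prop :=
  ∀ (σ : Equiv.Perm (Fin n)) (x : Fin n → ℝ), f (x ∘ σ) = f x ∘ σ

/-- `σ` is a permutation sorting `x` in nonincreasing order. -/
def SortsPerm (n : ℕ) (σ : Equiv.Perm (Fin n)) (x : Fin n → ℝ) : Prop :=
  Antitone (x ∘ σ)

/-- The sorted (nonincreasing) version of `x`. -/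
noncomputable def sortedDesc (n : ℕ) (x : Fin n → ℝ) : Fin n → ℝ :=
  fun i => x (Tuple.sort (fun j => -x j) i)

lemma iop_eq_iff {n f} (hop : IntraOrderPreserving n f) (x : Fin n → ℝ) (i j : Fin n) :
    x i = x j ↔ f x i = f x j := by
  constructor
  · intro h
    by_contra hne
    rcases lt_or_gt_of_ne hne with h1 | h1
    · exact absurd ((hop x j i).mpr h1) (by simp [h])
    · exact absurd ((hop x i j).mpr h1) (by simp [h])
  · intro h
    by_contra hne
    rcases lt_or_gt_of_ne hne with h1 | h1
    · exact absurd ((hop x j i).mp h1) (by simp [h])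
    · exact absurd ((hop x i j).mp h1) (by simp [h])

lemma sorts_sort (n : ℕ) (x : Fin n → ℝ) :
    SortsPerm n (Tuple.sort (fun j => -x j)) x := by
  have h := Tuple.monotone_sort (fun j => -x j)
  intro a b hab
  have := h hab
  simpa using this

lemma sorted_eq {n : ℕ} {σ : Equiv.Perm (Fin n)} {x : Fin n → ℝ}
    (hσ : SortsPerm n σ x) : ∀ i, x (σ i) = sortedDesc n x i := by
  have hm : Monotone ((fun j => -x j) ∘ σ) := by
    intro a b hab
    simpa using hσ hab
  have h := (Tuple.comp_sort_eq_comp_iff_monotone (f := fun j => -x j) (σ := σ)).mpr hm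
  intro i
  have := congrFun h i
  simp only [Function.comp_apply, neg_inj] at this
  exact this

/-- the candidate w -/
noncomputable def wOf (n : ℕ) (f : (Fin n → ℝ) → (Fin n → ℝ)) : (Fin n → ℝ) → (Fin n → ℝ) :=
  fun z i => if h : (i : ℕ) + 1 < n then f z i - f z ⟨(i : ℕ) + 1, h⟩ else f z i

lemma wOf_continuous (n : ℕ) (f : (Fin n → ℝ) → (Fin n → ℝ)) (hf : Continuous f) :
    Continuous (wOf n f) := by
  apply continuous_pi
  intro i
  unfold wOf
  by_cases h : (i : ℕ) + 1 < n
  · simp only [h, dif_pos]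
    exact ((continuous_apply i).comp hf).sub ((continuous_apply _).comp hf)
  · simp only [h, dif_neg, not_false_iff]
    exact (continuous_apply i).comp hf

lemma wOf_sum (n : ℕ) (f : (Fin n → ℝ) → (Fin n → ℝ)) (z : Fin n → ℝ) (i : Fin n) :
    ∑ j ∈ Finset.Ici i, wOf n f z j = f z i := by
  rcases n with _ | m
  · exact i.elim0
  induction i using Fin.reverseInduction with
  | last =>
      have hIci : Finset.Ici (Fin.last m) = {Fin.last m} := by
        ext j
        simp [Fin.last_le_iff]
      rw [hIci, Finset.sum_singleton]
      have : ¬ ((Fin.last m : ℕ) + 1 < m + 1) := by simp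
      simp [wOf, this]
  | cast i ih =>
      have hnotmem : Fin.castSucc i ∉ Finset.Ici i.succ := by
        simp [Fin.castSucc_lt_succ (i := i)]
      have hIci : Finset.Ici (Fin.castSucc i) = insert (Fin.castSucc i) (Finset.Ici i.succ) := by
        ext j
        simp only [Finset.mem_Ici, Finset.mem_insert]
        constructor
        · intro h
          rcases eq_or_lt_of_le h with h1 | h1
          · exact Or.inl h1.symm
          · exact Or.inr (Fin.castSucc_lt_iff_succ_le.mp h1)
        · rintro (rfl | h)
          · exact le_refl _
          · exact le_of_lt (Fin.castSucc_lt_iff_succ_le.mpr h)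
      rw [hIci, Finset.sum_insert hnotmem, ih]
      have h1 : ((Fin.castSucc i : Fin (m+1)) : ℕ) + 1 < m + 1 := by
        simp [Fin.is_lt]
      have h2 : (⟨((Fin.castSucc i : Fin (m+1)) : ℕ) + 1, h1⟩ : Fin (m+1)) = i.succ := by
        apply Fin.ext; simp
      simp only [wOf, dif_pos h1, h2]
      ring

theorem stmt_1 (n : ℕ) (hn : 1 ≤ n) (f : (Fin n → ℝ) → (Fin n → ℝ))
    (hf : Continuous f) (hop : IntraOrderPreserving n f) :
    OrderInvariant n f ↔
      ∃ w : (Fin n → ℝ) → (Fin n → ℝ), Continuous w ∧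
        (∀ (x : Fin n → ℝ) (σ : Equiv.Perm (Fin n)), SortsPerm n σ x →
          ∀ i : Fin n, f x (σ i) = ∑ j ∈ Finset.Ici i, w (sortedDesc n x) j) ∧
        (∀ (x : Fin n → ℝ) (i : ℕ) (hi : i + 1 < n),
          (sortedDesc n x ⟨i, Nat.lt_of_succ_lt hi⟩ = sortedDesc n x ⟨i + 1, hi⟩ →
            w (sortedDesc n x) ⟨i, Nat.lt_of_succ_lt hi⟩ = 0) ∧
          (sortedDesc n x ⟨i, Nat.lt_of_succ_lt hi⟩ > sortedDesc n x ⟨i + 1, hi⟩ →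
            0 < w (sortedDesc n x) ⟨i, Nat.lt_of_succ_lt hi⟩)) := by
  constructor
  · intro hinv
    refine ⟨wOf n f, wOf_continuous n f hf, ?_, ?_⟩
    · intro x σ hσ i
      set τ := Tuple.sort (fun j => -x j) with hτdef
      have hy : sortedDesc n x = x ∘ τ := rfl
      have hfy : f (sortedDesc n x) = f x ∘ τ := by rw [hy, hinv τ x]
      rw [wOf_sum]
      have h1 : x (σ i) = x (τ i) := by
        rw [sorted_eq hσ i]; rfl
      have h2 : f x (σ i) = f x (τ i) := (iop_eq_iff hop x _ _).mp h1
      rw [h2, hfy]; rfl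
    · intro x i hi
      constructor
      · intro h
        have := (iop_eq_iff hop (sortedDesc n x) ⟨i, Nat.lt_of_succ_lt hi⟩ ⟨i+1, hi⟩).mp h
        simp [wOf, hi, this]
      · intro h
        have := (hop (sortedDesc n x) ⟨i, Nat.lt_of_succ_lt hi⟩ ⟨i+1, hi⟩).mp h
        simp only [wOf]
        rw [dif_pos hi]
        linarith
  · rintro ⟨w, -, hw1, -⟩
    intro σ x
    funext k
    set τ := Tuple.sort (fun j => -x j) with hτdef
    have hτ : SortsPerm n τ x := sorts_sort n x
    set ρ : Equiv.Perm (Fin n) := τ.trans σ.symm with hρdef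
    have hρ : SortsPerm n ρ (x ∘ σ) := by
      intro a b hab
      have := hτ hab
      simpa [hρdef, Function.comp] using this
    have hsorted : sortedDesc n (x ∘ σ) = sortedDesc n x := by
      funext i
      rw [← sorted_eq hρ i, ← sorted_eq hτ i]
      simp [hρdef]
    have h1 := hw1 (x ∘ σ) ρ hρ (τ.symm (σ k))
    have h2 := hw1 x τ hτ (τ.symm (σ k))
    rw [hsorted] at h1
    have hρk : ρ (τ.symm (σ k)) = k := by simp [hρdef]
    have hτk : τ (τ.symm (σ k)) = σ k := by simp
    rw [hρk] at h1
    rw [hτk] at h2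
    rw [h1, ← h2]
    rfl
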